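/- arXiv:1707.09112 — 4 statements merged into one kernel-verified Lean document; each statement's English description precedes it below -/
import Mathlib

section
/- Let 1 ≤ r ≤ (1/2)·min(p,q) and let N > (p+q)r − r². Then for Lebesgue-almost every tuple A = (A_1, …, A_N) ∈ (ℝ^{p×q})^N (equivalently, with probability one when A is drawn from any probability distribution on (ℝ^{p×q})^N that is absolutely continuous with respect to Lebesgue measure), A has the almost everywhere rank-r matrix recovery property in ℝ^{p×q}: the set {P ∈ M_{p×q,r}(ℝ) : there exists Q ∈ M_{p×q,r}(ℝ) with Q ≠ P and Tr(A_j^T Q) = Tr(A_j^T P) for all 1 ≤ j ≤ N} has ((p+q)r − r²)-dimensional Hausdorff measure zero. -/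
open MeasureTheory Matrix

noncomputable section

/- Metric / measure-theoretic structure on matrix spaces, transported from the
corresponding pi types (`Matrix m n α` is by definition `m → n → α`). -/
instance {l o α : Type*} [Fintype l] [Fintype o] [MetricSpace α] :
    MetricSpace (Matrix l o α) := inferInstanceAs (MetricSpace (l → o → α))

instance {l o α : Type*} [MeasurableSpace α] : MeasurableSpace (Matrix l o α) :=
  inferInstanceAs (MeasurableSpace (l → o → α))

instance {l o α : Type*} [Countable l] [Countable o] [MeasurableSpace α] [TopologicalSpace α]
    [SecondCountableTopology α] [BorelSpace α] : BorelSpace (Matrix l o α) :=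
  inferInstanceAs (BorelSpace (l → o → α))

instance {l o α : Type*} [Fintype l] [Fintype o] [MeasureSpace α]
    [SigmaFinite (volume : Measure α)] : MeasureSpace (Matrix l o α) :=
  inferInstanceAs (MeasureSpace (l → o → α))

/-- The (Krull) dimension of a subset `V` of `σ → k`, i.e. the Krull dimension of the
quotient of the polynomial ring by the vanishing ideal of `V`. -/
def algDim (k : Type*) [Field k] {σ : Type*} (V : Set (σ → k)) : WithBot ℕ∞ :=
  ringKrullDim (MvPolynomial σ k ⧸ MvPolynomial.vanishingIdeal k V)

/-- `V ⊆ (σ → k)` is an algebraic set: the common zero locus of finitely many polynomials. -/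
def IsAlgSet (k : Type*) [Field k] {σ : Type*} (V : Set (σ → k)) : Prop :=
  ∃ S : Finset (MvPolynomial σ k), V = {x | ∀ f ∈ S, MvPolynomial.eval x f = 0}

/-- `V ⊆ (σ → k)` is a projective variety (affine cone): the common zero locus of
finitely many homogeneous polynomials. -/
def IsProjVariety (k : Type*) [Field k] {σ : Type*} (V : Set (σ → k)) : Prop :=
  ∃ S : Finset (MvPolynomial σ k), (∀ f ∈ S, ∃ n, f.IsHomogeneous n) ∧
    V = {x | ∀ f ∈ S, MvPolynomial.eval x f = 0}

/-- Identify a `p × q` matrix with a point of `k^(p*q)`. -/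
def matToFun {k : Type*} {p q : ℕ} (M : Matrix (Fin p) (Fin q) k) : Fin p × Fin q → k :=
  fun ij => M ij.1 ij.2

/-- Dimension of a set of matrices, viewed as an algebraic set. -/
def matDim (k : Type*) [Field k] {p q : ℕ} (V : Set (Matrix (Fin p) (Fin q) k)) :
    WithBot ℕ∞ :=
  algDim k (matToFun '' V)

/-- A set of matrices is a projective variety (cut out by homogeneous polynomials in
the entries). -/
def matIsProjVariety (k : Type*) [Field k] {p q : ℕ}
    (V : Set (Matrix (Fin p) (Fin q) k)) : Prop :=
  IsProjVariety k (matToFun '' V)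

/-- A set of matrices is an algebraic set (cut out by polynomials in the entries). -/
def matIsAlgSet (k : Type*) [Field k] {p q : ℕ}
    (V : Set (Matrix (Fin p) (Fin q) k)) : Prop :=
  IsAlgSet k (matToFun '' V)

/-- Identify an `N`-tuple of `p × q` matrices with a point of `k^(N*p*q)`. -/
def tupToFun {k : Type*} {N p q : ℕ} (A : Fin N → Matrix (Fin p) (Fin q) k) :
    Fin N × Fin p × Fin q → k := fun x => A x.1 x.2.1 x.2.2

/-- Dimension of a set of tuples of matrices, viewed as an algebraic set. -/
def tupDim (k : Type*) [Field k] {N p q : ℕ}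
    (V : Set (Fin N → Matrix (Fin p) (Fin q) k)) : WithBot ℕ∞ :=
  algDim k (tupToFun '' V)

/-- A set of tuples of matrices is an algebraic set. -/
def tupIsAlgSet (k : Type*) [Field k] {N p q : ℕ}
    (V : Set (Fin N → Matrix (Fin p) (Fin q) k)) : Prop :=
  IsAlgSet k (tupToFun '' V)

/-! ### Auxiliary material for the proof of `stmt1` -/

open Set
open scoped ENNReal NNReal

section RecoveryAux

variable {p q r N : ℕ}

/-- Parameter index type for the rank-`≤ r` charts. -/
abbrev Kap (p q r : ℕ) := (Fin r × Fin q) ⊕ (Fin (p - r) × Fin r)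

/-- Flat chart map: the `r` rows selected by `e` are free parameters, the others are linear
combinations of them with free coefficients. -/
def chartF (e : Fin p ≃ Fin r ⊕ Fin (p - r)) (u : Kap p q r → ℝ) : Fin p × Fin q → ℝ :=
  fun x => Sum.elim (fun k => u (Sum.inl (k, x.2)))
    (fun m => ∑ k : Fin r, u (Sum.inr (m, k)) * u (Sum.inl (k, x.2))) (e x.1)

/-- Matrix version of the chart map. -/
def chartM (e : Fin p ≃ Fin r ⊕ Fin (p - r)) (u : Kap p q r → ℝ) :
    Matrix (Fin p) (Fin q) ℝ := Matrix.of fun i j => chartF e u (i, j)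

lemma chartF_contDiff (e : Fin p ≃ Fin r ⊕ Fin (p - r)) (x : Fin p × Fin q) :
    ContDiff ℝ 1 (fun u : Kap p q r → ℝ => chartF e u x) := by
  unfold chartF
  cases h : e x.1 with
  | inl k => simpa [h] using (contDiff_apply ℝ ℝ (Sum.inl (k, x.2)) :
      ContDiff ℝ 1 fun u : Kap p q r → ℝ => u (Sum.inl (k, x.2)))
  | inr m =>
    simp only [h, Sum.elim_inr]
    exact ContDiff.sum fun k _ =>
      ((ContinuousLinearMap.proj (R := ℝ) (φ := fun _ : Kap p q r => ℝ)
        (Sum.inr (m, k))).contDiff).mul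
      ((ContinuousLinearMap.proj (R := ℝ) (φ := fun _ : Kap p q r => ℝ)
        (Sum.inl (k, x.2))).contDiff)

/-- Every matrix of rank at most `r` is in the image of some chart. -/
lemma chart_cover (hrp : r ≤ p) (P : Matrix (Fin p) (Fin q) ℝ) (hP : P.rank ≤ r) :
    ∃ (e : Fin p ≃ Fin r ⊕ Fin (p - r)) (u : Kap p q r → ℝ), chartM e u = P := by
  classical
  obtain ⟨b, hbsub, hbspan, hbind⟩ :=
    exists_linearIndependent ℝ (Set.range (P : Fin p → Fin q → ℝ))
  have hbfin : b.Finite := (Set.finite_range _).subset hbsub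
  haveI : Fintype b := hbfin.fintype
  have hcardb : b.toFinset.card ≤ r := by
    have h1 : Module.finrank ℝ (Submodule.span ℝ b) = b.toFinset.card :=
      finrank_span_set_eq_card hbind
    have h2 : Module.finrank ℝ
        (Submodule.span ℝ (Set.range (P : Fin p → Fin q → ℝ))) ≤ r := by
      rw [Matrix.rank_eq_finrank_span_row] at hP; exact hP
    rw [← h1, hbspan]; exact h2
  have hpre : ∀ v : b, ∃ i : Fin p, P i = (v : Fin q → ℝ) := fun v => hbsub v.2
  choose pick hpick using hpre
  set t0 : Finset (Fin p) := Finset.univ.image pick with ht0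
  have hcardt0 : t0.card ≤ r := by
    refine le_trans (Finset.card_image_le) ?_
    simpa [Set.toFinset_card] using hcardb
  obtain ⟨t, ht0t, -, hcardt⟩ := Finset.exists_subsuperset_card_eq (t0.subset_univ)
    hcardt0 (by simpa using hrp)
  have hspan : ∀ i : Fin p, P i ∈ Submodule.span ℝ (P '' (t : Set (Fin p))) := by
    intro i
    have h1 : P i ∈ Submodule.span ℝ (Set.range (P : Fin p → Fin q → ℝ)) :=
      Submodule.subset_span (Set.mem_range_self i)
    rw [← hbspan] at h1
    refine Submodule.span_mono ?_ h1
    intro v hv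
    refine ⟨pick ⟨v, hv⟩, ?_, hpick ⟨v, hv⟩⟩
    exact ht0t (by simp [ht0])
  let heq1 : {x // x ∈ t} ≃ Fin r := t.equivFinOfCardEq hcardt
  let heq2 : {x // ¬ x ∈ t} ≃ Fin (p - r) :=
    (Equiv.subtypeEquivRight (fun x => by simp [Finset.mem_compl])).trans
      (tᶜ.equivFinOfCardEq (by rw [Finset.card_compl, hcardt, Fintype.card_fin]))
  let e : Fin p ≃ Fin r ⊕ Fin (p - r) :=
    (Equiv.sumCompl (· ∈ t)).symm.trans (heq1.sumCongr heq2)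
  have hrowt : ∀ i (hi : i ∈ t), e i = Sum.inl (heq1 ⟨i, hi⟩) := by
    intro i hi
    simp only [e, Equiv.trans_apply, Equiv.sumCompl_symm_apply_of_pos hi,
      Equiv.sumCongr_apply, Sum.map_inl]
  set rows : Fin r → (Fin q → ℝ) := fun k => P (e.symm (Sum.inl k)) with hrows
  have hspan2 : ∀ i : Fin p, P i ∈ Submodule.span ℝ (Set.range rows) := by
    intro i
    refine Submodule.span_mono ?_ (hspan i)
    rintro v ⟨i', hi', rfl⟩
    refine ⟨heq1 ⟨i', hi'⟩, ?_⟩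
    show P (e.symm (Sum.inl (heq1 ⟨i', hi'⟩))) = P i'
    rw [← hrowt _ hi', Equiv.symm_apply_apply]
  have hc : ∀ m : Fin (p - r), ∃ cm : Fin r → ℝ,
      ∑ k, cm k • rows k = P (e.symm (Sum.inr m)) :=
    fun m => (Submodule.mem_span_range_iff_exists_fun ℝ).1 (hspan2 _)
  choose c hcspec using hc
  refine ⟨e, Sum.elim (fun kj => P (e.symm (Sum.inl kj.1)) kj.2) (fun mk => c mk.1 mk.2), ?_⟩
  ext i j
  show chartF e _ (i, j) = P i j
  unfold chartF
  cases h : e i with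
  | inl k =>
    simp only [Sum.elim_inl]
    rw [← h, Equiv.symm_apply_apply]
  | inr m =>
    simp only [Sum.elim_inr, Sum.elim_inl]
    have h2 := congrFun (hcspec m) j
    rw [Finset.sum_apply] at h2
    simp only [Pi.smul_apply, smul_eq_mul, hrows] at h2
    rw [h2, ← h, Equiv.symm_apply_apply]

/-- Image of a set under a map that is `C¹` at each of its points, from a lower-dimensional
pi space into a higher-dimensional one, is Lebesgue-null. -/
lemma null_image_of_contDiffAt {ι ι' : Type*} [Fintype ι] [Fintype ι']
    (hc : Fintype.card ι' < Fintype.card ι) {f : (ι' → ℝ) → (ι → ℝ)} {O : Set (ι' → ℝ)}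
    (hf : ∀ x ∈ O, ContDiffAt ℝ 1 f x) :
    volume (f '' O) = 0 := by
  classical
  choose K t ht hlip using fun x (hx : x ∈ O) => (hf x hx).exists_lipschitzOnWith
  obtain ⟨S, hSO, hSc, hScov⟩ := TopologicalSpace.countable_cover_nhdsWithin
    (f := fun x => if hx : x ∈ O then t x hx else ∅) (s := O)
    (fun x hx => by
      show (if hx : x ∈ O then t x hx else ∅) ∈ _
      rw [dif_pos hx]; exact nhdsWithin_le_nhds (ht x hx))
  have hnull : ∀ s : Set (ι' → ℝ), μH[(Fintype.card ι : ℝ)] s = 0 := by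
    intro s
    refine measure_mono_null (subset_univ _) ?_
    have hlt : dimH (univ : Set (ι' → ℝ)) < ((Fintype.card ι : ℝ≥0) : ℝ≥0∞) := by
      rw [Real.dimH_univ_pi]
      exact_mod_cast hc
    simpa using hausdorffMeasure_of_dimH_lt hlt
  have himg : f '' O ⊆ ⋃ x ∈ S, f '' (if hx : x ∈ O then t x hx else ∅) := by
    rintro y ⟨x, hx, rfl⟩
    obtain ⟨z, hz⟩ := mem_iUnion.1 (hScov hx)
    simp only [mem_iUnion] at hz ⊢
    obtain ⟨hzS, hxt⟩ := hz
    exact ⟨z, hzS, x, hxt, rfl⟩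
  refine measure_mono_null himg ((measure_biUnion_null_iff hSc).2 fun x hxS => ?_)
  have hxO : x ∈ O := hSO hxS
  rw [dif_pos hxO]
  have hle := (hlip x hxO).hausdorffMeasure_image_le (d := (Fintype.card ι : ℝ)) (by positivity)
  rw [hnull, mul_zero] at hle
  have hv : (volume : Measure (ι → ℝ)) = μH[(Fintype.card ι : ℝ)] :=
    hausdorffMeasure_pi_real.symm
  rw [hv]
  exact le_antisymm hle zero_le

/-- Flat ambient space for (measurement tuple, chart parameter) pairs. -/
abbrev OmegaT (p q r N : ℕ) := ((Fin N × (Fin p × Fin q)) ⊕ Kap p q r) → ℝ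

def uPart (ω : OmegaT p q r N) : Kap p q r → ℝ := fun k => ω (Sum.inr k)

/-- The "bad" set in the joint (measurement, parameter) space. -/
def TotalBad (N : ℕ) (e : Fin p ≃ Fin r ⊕ Fin (p - r)) : Set (OmegaT p q r N) :=
  {ω | ∃ Q : Matrix (Fin p) (Fin q) ℝ, Q.rank ≤ r ∧ Q ≠ chartM e (uPart ω) ∧
    ∀ j : Fin N, ∑ x : Fin p × Fin q,
      ω (Sum.inl (j, x)) * (Q x.1 x.2 - chartM e (uPart ω) x.1 x.2) = 0}

abbrev OmegaS (p q r N : ℕ) (i : Fin p × Fin q) : Type :=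
  ((Fin N × {x : Fin p × Fin q // x ≠ i}) ⊕ (Kap p q r ⊕ Kap p q r)) → ℝ

def uPart' {i : Fin p × Fin q} (ω' : OmegaS p q r N i) : Kap p q r → ℝ :=
  fun k => ω' (Sum.inr (Sum.inl k))
def vPart' {i : Fin p × Fin q} (ω' : OmegaS p q r N i) : Kap p q r → ℝ :=
  fun k => ω' (Sum.inr (Sum.inr k))

def Dfun (e e' : Fin p ≃ Fin r ⊕ Fin (p - r)) {i : Fin p × Fin q}
    (ω' : OmegaS p q r N i) : Fin p × Fin q → ℝ :=
  fun x => chartF e' (vPart' ω') x - chartF e (uPart' ω') x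

/-- The solving map: reconstructs the coordinate of the measurement vectors at entry `i`
from the other coordinates, using orthogonality to the difference of two chart points. -/
def Hmap (e e' : Fin p ≃ Fin r ⊕ Fin (p - r)) (i : Fin p × Fin q)
    (ω' : OmegaS p q r N i) : OmegaT p q r N :=
  fun tt => match tt with
  | Sum.inr k => uPart' ω' k
  | Sum.inl (j, x) =>
      if h : x = i then
        (- ∑ y : {x : Fin p × Fin q // x ≠ i}, ω' (Sum.inl (j, y)) * Dfun e e' ω' y.1)
          / Dfun e e' ω' i
      else ω' (Sum.inl (j, ⟨x, h⟩))

lemma uPart'_contDiff {i : Fin p × Fin q} :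
    ContDiff ℝ 1 (fun ω' : OmegaS p q r N i => uPart' ω') :=
  contDiff_pi.2 fun k => (ContinuousLinearMap.proj (R := ℝ)
    (φ := fun _ : (Fin N × {x : Fin p × Fin q // x ≠ i}) ⊕ (Kap p q r ⊕ Kap p q r) => ℝ)
    (Sum.inr (Sum.inl k))).contDiff

lemma vPart'_contDiff {i : Fin p × Fin q} :
    ContDiff ℝ 1 (fun ω' : OmegaS p q r N i => vPart' ω') :=
  contDiff_pi.2 fun k => (ContinuousLinearMap.proj (R := ℝ)
    (φ := fun _ : (Fin N × {x : Fin p × Fin q // x ≠ i}) ⊕ (Kap p q r ⊕ Kap p q r) => ℝ)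
    (Sum.inr (Sum.inr k))).contDiff

lemma Dfun_contDiff (e e' : Fin p ≃ Fin r ⊕ Fin (p - r)) {i : Fin p × Fin q}
    (x : Fin p × Fin q) :
    ContDiff ℝ 1 (fun ω' : OmegaS p q r N i => Dfun e e' ω' x) :=
  ((chartF_contDiff e' x).comp vPart'_contDiff).sub
    ((chartF_contDiff e x).comp uPart'_contDiff)

lemma Hmap_contDiffAt (e e' : Fin p ≃ Fin r ⊕ Fin (p - r)) (i : Fin p × Fin q)
    {ω'₀ : OmegaS p q r N i} (h0 : Dfun e e' ω'₀ i ≠ 0) :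
    ContDiffAt ℝ 1 (Hmap (N := N) e e' i) ω'₀ := by
  rw [contDiffAt_pi]
  rintro (⟨j, x⟩ | k)
  · show ContDiffAt ℝ 1 (fun ω' => if h : x = i then _ else _) ω'₀
    by_cases h : x = i
    · simp only [dif_pos h]
      refine ContDiffAt.div ?_ ((Dfun_contDiff e e' i).contDiffAt) h0
      refine ContDiffAt.neg ?_
      refine (ContDiff.sum fun y _ => ?_).contDiffAt
      exact ((ContinuousLinearMap.proj (R := ℝ)
        (φ := fun _ : (Fin N × {x : Fin p × Fin q // x ≠ i}) ⊕ (Kap p q r ⊕ Kap p q r) => ℝ)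
        (Sum.inl (j, y))).contDiff).mul (Dfun_contDiff e e' y.1)
    · simp only [dif_neg h]
      exact ((ContinuousLinearMap.proj (R := ℝ)
        (φ := fun _ : (Fin N × {x : Fin p × Fin q // x ≠ i}) ⊕ (Kap p q r ⊕ Kap p q r) => ℝ)
        (Sum.inl (j, ⟨x, h⟩))).contDiff).contDiffAt
  · exact ((ContinuousLinearMap.proj (R := ℝ)
      (φ := fun _ : (Fin N × {x : Fin p × Fin q // x ≠ i}) ⊕ (Kap p q r ⊕ Kap p q r) => ℝ)
      (Sum.inr (Sum.inl k))).contDiff).contDiffAt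

lemma totalBad_null (hrp : r ≤ p) (hq : 1 ≤ p * q)
    (hdN : r * q + (p - r) * r < N) (e : Fin p ≃ Fin r ⊕ Fin (p - r)) :
    volume (TotalBad (p := p) (q := q) (r := r) N e) = 0 := by
  classical
  have hsub : TotalBad (p := p) (q := q) (r := r) N e ⊆
      ⋃ (e' : Fin p ≃ Fin r ⊕ Fin (p - r)), ⋃ (i : Fin p × Fin q),
        Hmap (N := N) e e' i '' {ω' | Dfun e e' ω' i ≠ 0} := by
    rintro ω ⟨Q, hQr, hQne, hQo⟩
    obtain ⟨e', v, hv⟩ := chart_cover hrp Q hQr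
    have hD : ∃ i : Fin p × Fin q, chartF e' v i - chartF e (uPart ω) i ≠ 0 := by
      by_contra hcon
      push_neg at hcon
      apply hQne
      rw [← hv]
      ext i j
      have := hcon (i, j)
      show chartF e' v (i, j) = chartF e (uPart ω) (i, j)
      linarith
    obtain ⟨i, hDi⟩ := hD
    simp only [mem_iUnion]
    refine ⟨e', i, ?_⟩
    set ω' : OmegaS p q r N i := fun tt =>
      Sum.elim (fun jy => ω (Sum.inl (jy.1, jy.2.1)))
        (Sum.elim (fun k => uPart ω k) (fun k => v k)) tt with hω'
    have hu' : uPart' ω' = uPart ω := rfl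
    have hv' : vPart' ω' = v := rfl
    have hDfun : ∀ x, Dfun e e' ω' x = chartF e' v x - chartF e (uPart ω) x := by
      intro x; rw [Dfun, hu', hv']
    refine ⟨ω', by simpa [mem_setOf_eq, hDfun] using hDi, ?_⟩
    funext tt
    match tt with
    | Sum.inr k => rfl
    | Sum.inl (j, x) =>
      show (if h : x = i then _ else _) = ω (Sum.inl (j, x))
      by_cases h : x = i
      · subst h
        rw [dif_pos rfl]
        have hsum := hQo j
        have hQD : ∀ x : Fin p × Fin q,
            Q x.1 x.2 - chartM e (uPart ω) x.1 x.2 = Dfun e e' ω' x := by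
          intro x
          rw [hDfun, ← hv]
          rfl
        simp only [hQD] at hsum
        have hsplit : ∑ y : Fin p × Fin q, ω (Sum.inl (j, y)) * Dfun e e' ω' y
            = (∑ y ∈ Finset.univ.erase x, ω (Sum.inl (j, y)) * Dfun e e' ω' y)
              + ω (Sum.inl (j, x)) * Dfun e e' ω' x :=
          (Finset.sum_erase_add _ _ (Finset.mem_univ x)).symm
        have hsubty : ∑ y : {y : Fin p × Fin q // y ≠ x}, ω' (Sum.inl (j, y)) * Dfun e e' ω' y.1
            = ∑ y ∈ Finset.univ.erase x, ω (Sum.inl (j, y)) * Dfun e e' ω' y :=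
          (Finset.sum_subtype (Finset.univ.erase x)
            (fun y => by simp [Finset.mem_erase])
            (fun y => ω (Sum.inl (j, y)) * Dfun e e' ω' y)).symm
        rw [hsubty]
        have h0 : Dfun e e' ω' x ≠ 0 := by simpa [hDfun] using hDi
        rw [div_eq_iff h0]
        rw [hsplit] at hsum
        linarith
      · rw [dif_neg h]
        rfl
  refine measure_mono_null hsub ?_
  refine (measure_iUnion_null_iff).2 fun e' => ?_
  refine (measure_iUnion_null_iff).2 fun i => ?_
  refine null_image_of_contDiffAt ?_ (fun x hx => Hmap_contDiffAt e e' i hx)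
  have hcs : Fintype.card {x : Fin p × Fin q // x ≠ i} = p * q - 1 := by
    have := Fintype.card_subtype_compl (fun x : Fin p × Fin q => x = i)
    simp only [Fintype.card_subtype_eq] at this
    simpa using this
  obtain ⟨m, hm⟩ : ∃ m, p * q = m + 1 := ⟨p * q - 1, by omega⟩
  simp only [Fintype.card_sum, Fintype.card_prod, Fintype.card_fin, hcs, hm]
  simp only [show (1 + m - 1 : ℕ) = m from by omega, show (m + 1 - 1 : ℕ) = m from by omega]
  have h2 : N * (1 + m) = N * m + N := by ring
  have h3 : N * (m + 1) = N * m + N := by ring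
  omega

/-- Unflattening a point of `ℝ^(p*q)` into a matrix. -/
def unflat {p q : ℕ} (x : Fin p × Fin q → ℝ) : Matrix (Fin p) (Fin q) ℝ :=
  Matrix.of fun i j => x (i, j)

lemma isometry_unflat : Isometry (unflat (p := p) (q := q)) := by
  intro x y
  show Finset.univ.sup (fun i : Fin p => Finset.univ.sup
      (fun j : Fin q => edist (x (i, j)) (y (i, j)))) = edist x y
  rw [edist_pi_def]
  rw [← Finset.univ_product_univ, Finset.sup_product_left]

/-- The image under a chart of a Lebesgue-null set of parameters is null for the
`card (Kap p q r)`-dimensional Hausdorff measure on matrices. -/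
lemma chart_image_null (e : Fin p ≃ Fin r ⊕ Fin (p - r)) {S : Set (Kap p q r → ℝ)}
    (hS : volume S = 0) :
    μH[(Fintype.card (Kap p q r) : ℝ)] (chartM e '' S) = 0 := by
  classical
  set d : ℝ := (Fintype.card (Kap p q r) : ℝ) with hd
  have hd0 : 0 ≤ d := by positivity
  have hSH : μH[d] S = 0 := by
    rw [hd, hausdorffMeasure_pi_real]; exact hS
  have hcd : ContDiff ℝ 1 (fun u : Kap p q r → ℝ => (chartF e u : Fin p × Fin q → ℝ)) :=
    contDiff_pi.2 fun x : Fin p × Fin q => chartF_contDiff (q := q) e x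
  choose K t ht hlip using fun x : Kap p q r → ℝ => hcd.contDiffAt (x := x).exists_lipschitzOnWith
  obtain ⟨T, -, hTc, hTcov⟩ := TopologicalSpace.countable_cover_nhdsWithin
    (f := fun x => t x) (s := (univ : Set (Kap p q r → ℝ)))
    (fun x _ => nhdsWithin_le_nhds (ht x))
  have hsub : chartM e '' S ⊆ ⋃ x ∈ T, chartM e '' (S ∩ t x) := by
    rintro y ⟨u, hu, rfl⟩
    obtain ⟨z, hz⟩ := mem_iUnion.1 (hTcov (mem_univ u))
    simp only [mem_iUnion] at hz ⊢
    exact ⟨z, hz.1, u, ⟨hu, hz.2⟩, rfl⟩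
  refine measure_mono_null hsub ((measure_biUnion_null_iff hTc).2 fun x hx => ?_)
  have himg : chartM e '' (S ∩ t x) = unflat '' ((fun u => chartF e u) '' (S ∩ t x)) := by
    rw [← image_comp]
    rfl
  rw [himg, isometry_unflat.hausdorffMeasure_image (Or.inl hd0)]
  have hle := ((hlip x).mono inter_subset_right).hausdorffMeasure_image_le (s := S ∩ t x) hd0
  have h0 : μH[d] (S ∩ t x) = 0 := measure_mono_null inter_subset_left hSH
  rw [h0, mul_zero] at hle
  exact le_antisymm hle zero_le

lemma tupToFun_measurable :
    Measurable (tupToFun (k := ℝ) (p := p) (q := q) (N := N)) := by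
  refine measurable_pi_lambda _ fun x => ?_
  have h1 : Measurable fun A : Fin N → Matrix (Fin p) (Fin q) ℝ => A x.1 :=
    measurable_pi_apply x.1
  have h2a : Measurable fun M : Matrix (Fin p) (Fin q) ℝ => M x.2.1 :=
    measurable_pi_apply (X := fun _ : Fin p => Fin q → ℝ) x.2.1
  have h2 : Measurable fun M : Matrix (Fin p) (Fin q) ℝ => M x.2.1 x.2.2 :=
    (measurable_pi_apply x.2.2).comp h2a
  exact h2.comp h1

lemma tupToFun_measurePreserving :
    MeasurePreserving (tupToFun (k := ℝ) (p := p) (q := q) (N := N)) volume volume := by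
  haveI : SigmaFinite (volume : Measure (Matrix (Fin p) (Fin q) ℝ)) :=
    inferInstanceAs (SigmaFinite (volume : Measure (Fin p → Fin q → ℝ)))
  refine ⟨tupToFun_measurable, ?_⟩
  refine (Measure.pi_eq fun s hs => ?_).symm
  rw [Measure.map_apply tupToFun_measurable (MeasurableSet.univ_pi hs)]
  have hpre : tupToFun ⁻¹' (univ.pi s) =
      univ.pi fun j : Fin N => univ.pi fun i : Fin p => univ.pi fun l : Fin q =>
        s (j, i, l) := by
    ext A
    simp only [mem_preimage, mem_pi, mem_univ, forall_true_left, true_implies]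
    constructor
    · intro h j _ i _ l _; exact h (j, i, l)
    · rintro h ⟨j, i, l⟩; exact h j trivial i trivial l trivial
  rw [hpre]
  refine (volume_pi_pi (α := fun _ : Fin N => Matrix (Fin p) (Fin q) ℝ)
    (fun j => univ.pi fun i => univ.pi fun l => s (j, i, l))).trans ?_
  have hstep : ∀ j : Fin N, (volume : Measure (Matrix (Fin p) (Fin q) ℝ))
      (univ.pi fun i => univ.pi fun l => s (j, i, l))
      = ∏ i : Fin p, ∏ l : Fin q, volume (s (j, i, l)) := by
    intro j
    have h1 : (volume : Measure (Fin p → Fin q → ℝ))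
        (univ.pi fun i => univ.pi fun l => s (j, i, l))
        = ∏ i : Fin p, (volume : Measure (Fin q → ℝ)) (univ.pi fun l => s (j, i, l)) :=
      volume_pi_pi _
    refine h1.trans ?_
    exact Finset.prod_congr rfl fun i _ => by rw [volume_pi_pi]
  simp_rw [hstep]
  rw [show (∏ x : Fin N × Fin p × Fin q, volume (s x))
      = ∏ j : Fin N, ∏ y : Fin p × Fin q, volume (s (j, y)) from
    Fintype.prod_prod_type _]
  exact Finset.prod_congr rfl fun j _ =>
    (Fintype.prod_prod_type (fun y : Fin p × Fin q => volume (s (j, y)))).symm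

lemma trace_transpose_mul_eq (B M : Matrix (Fin p) (Fin q) ℝ) :
    (Bᵀ * M).trace = ∑ x : Fin p × Fin q, B x.1 x.2 * M x.1 x.2 := by
  rw [Matrix.trace, Fintype.sum_prod_type]
  simp only [Matrix.diag_apply, Matrix.mul_apply, Matrix.transpose_apply]
  exact (Finset.sum_comm)

end RecoveryAux

theorem stmt1 (p q r N : ℕ) (hr1 : 1 ≤ r) (hr2 : 2 * r ≤ min p q)
    (hN : (p + q) * r - r ^ 2 < N) :
    ∀ᵐ A ∂(volume : Measure (Fin N → Matrix (Fin p) (Fin q) ℝ)),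
      μH[(((p + q) * r - r ^ 2 : ℕ) : ℝ)]
        {P : Matrix (Fin p) (Fin q) ℝ | P.rank ≤ r ∧
          ∃ Q : Matrix (Fin p) (Fin q) ℝ, Q.rank ≤ r ∧ Q ≠ P ∧
            ∀ j : Fin N, ((A j)ᵀ * Q).trace = ((A j)ᵀ * P).trace} = 0 := by
  classical
  have hminp := min_le_left p q
  have hminq := min_le_right p q
  have hrp : r ≤ p := by omega
  have hrq : r ≤ q := by omega
  have hpq1 : 1 ≤ p * q := by
    have : 1 ≤ p := by omega
    have : 1 ≤ q := by omega
    exact Nat.one_le_iff_ne_zero.2 (by positivity)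
  have hdeq : r * q + (p - r) * r = (p + q) * r - r ^ 2 := by
    have e1 : (p + q) * r = p * r + r * q := by ring
    have e2 : (r : ℕ) ^ 2 = r * r := sq r
    have e3 : (p - r) * r = p * r - r * r := Nat.sub_mul p r r
    have e4 : r * r ≤ p * r := Nat.mul_le_mul_right r hrp
    omega
  have hdN : r * q + (p - r) * r < N := by rw [hdeq]; exact hN
  have hcard : Fintype.card (Kap p q r) = r * q + (p - r) * r := by
    simp [Fintype.card_sum, Fintype.card_prod]
  -- the measurable equivalence splitting the flat ambient space
  set ψ := MeasurableEquiv.sumPiEquivProdPi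
    (fun _ : (Fin N × (Fin p × Fin q)) ⊕ Kap p q r => ℝ) with hψdef
  have hψ : MeasurePreserving ψ volume volume :=
    volume_measurePreserving_sumPiEquivProdPi _
  have hTB : ∀ e : Fin p ≃ Fin r ⊕ Fin (p - r),
      volume (TotalBad (p := p) (q := q) (r := r) N e) = 0 :=
    totalBad_null hrp hpq1 hdN
  set Sm : (Fin p ≃ Fin r ⊕ Fin (p - r)) → Set (OmegaT p q r N) :=
    fun e => toMeasurable volume (TotalBad N e) with hSmdef
  have hSm_meas : ∀ e, MeasurableSet (Sm e) := fun e => measurableSet_toMeasurable _ _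
  have hSm0 : ∀ e, volume (Sm e) = 0 := fun e => by
    rw [hSmdef]; rw [measure_toMeasurable]; exact hTB e
  set T' : (Fin p ≃ Fin r ⊕ Fin (p - r)) →
      Set (((Fin N × (Fin p × Fin q)) → ℝ) × (Kap p q r → ℝ)) :=
    fun e => ψ '' Sm e with hT'def
  have hT'meas : ∀ e, MeasurableSet (T' e) := fun e =>
    ψ.measurableEmbedding.measurableSet_image.2 (hSm_meas e)
  have hT'0 : ∀ e, volume (T' e) = 0 := fun e => by
    have h := hψ.measure_preimage (hT'meas e).nullMeasurableSet
    rw [show ψ ⁻¹' (T' e) = Sm e from Set.preimage_image_eq _ ψ.injective] at h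
    rw [← h]; exact hSm0 e
  have hslice : ∀ e, ∀ᵐ a ∂(volume : Measure ((Fin N × (Fin p × Fin q)) → ℝ)),
      volume (Prod.mk a ⁻¹' T' e) = 0 := fun e => by
    have h := hT'0 e
    rw [Measure.volume_eq_prod] at h
    exact Measure.measure_ae_null_of_prod_null h
  have hslice' : ∀ᵐ a ∂(volume : Measure ((Fin N × (Fin p × Fin q)) → ℝ)),
      ∀ e, volume (Prod.mk a ⁻¹' T' e) = 0 := ae_all_iff.2 hslice
  have hG : ∀ᵐ A ∂(volume : Measure (Fin N → Matrix (Fin p) (Fin q) ℝ)),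
      ∀ e, volume (Prod.mk (tupToFun A) ⁻¹' T' e) = 0 := by
    rw [ae_iff] at hslice' ⊢
    refine measure_mono_null (t := tupToFun ⁻¹' (toMeasurable volume
        {a | ¬ ∀ e, volume (Prod.mk a ⁻¹' T' e) = 0}))
      (fun A hA => mem_preimage.2 (subset_toMeasurable volume _ hA)) ?_
    rw [tupToFun_measurePreserving.measure_preimage
      (measurableSet_toMeasurable _ _).nullMeasurableSet, measure_toMeasurable]
    exact hslice'
  filter_upwards [hG] with A hA
  have hcover : {P : Matrix (Fin p) (Fin q) ℝ | P.rank ≤ r ∧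
      ∃ Q : Matrix (Fin p) (Fin q) ℝ, Q.rank ≤ r ∧ Q ≠ P ∧
        ∀ j : Fin N, ((A j)ᵀ * Q).trace = ((A j)ᵀ * P).trace}
      ⊆ ⋃ e : Fin p ≃ Fin r ⊕ Fin (p - r),
          chartM e '' (Prod.mk (tupToFun A) ⁻¹' T' e) := by
    rintro P ⟨hPr, Q, hQr, hQne, hQtr⟩
    obtain ⟨e, u, hu⟩ := chart_cover hrp P hPr
    simp only [mem_iUnion]
    refine ⟨e, u, ?_, hu⟩
    show (tupToFun A, u) ∈ T' e
    refine Set.image_mono (f := ψ) (subset_toMeasurable volume _) ?_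
    refine ⟨fun tt => Sum.elim (fun x => tupToFun A x) (fun k => u k) tt, ?_, ?_⟩
    · refine ⟨Q, hQr, ?_, ?_⟩
      · show Q ≠ chartM e u
        rw [hu]; exact hQne
      · intro j
        show ∑ x : Fin p × Fin q,
          tupToFun A (j, x) * (Q x.1 x.2 - chartM e u x.1 x.2) = 0
        rw [hu]
        have h1 := hQtr j
        rw [trace_transpose_mul_eq, trace_transpose_mul_eq] at h1
        have : ∀ x : Fin p × Fin q, tupToFun A (j, x) = A j x.1 x.2 := fun _ => rfl
        simp only [this, mul_sub, Finset.sum_sub_distrib, h1, sub_self]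
    · rfl
  refine measure_mono_null hcover (measure_iUnion_null fun e => ?_)
  have hnull := chart_image_null e (hA e)
  have hexp : (((p + q) * r - r ^ 2 : ℕ) : ℝ) = (Fintype.card (Kap p q r) : ℝ) := by
    rw [hcard, hdeq]
  rw [hexp]
  exact hnull
end
end

section
/- Let U ⊆ ℝ^m be a nonempty open set, let n < m, and let Φ : U → ℝ^n be a continuously differentiable (C¹) map. Then Φ cannot be almost everywhere injective: the set {x ∈ U : there exists y ∈ U with y ≠ x and Φ(y) = Φ(x)} is not a Lebesgue null set in ℝ^m. -/
open MeasureTheory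

open MeasureTheory Set
set_option maxHeartbeats 1000000
set_option synthInstance.maxHeartbeats 400000

lemma key_lin {F G H : Type*} [NormedAddCommGroup F] [NormedSpace ℝ F]
    [NormedAddCommGroup G] [NormedSpace ℝ G] [NormedAddCommGroup H] [NormedSpace ℝ H]
    [FiniteDimensional ℝ F] [FiniteDimensional ℝ G] [FiniteDimensional ℝ H]
    (N : (F × G) →L[ℝ] H) (p : H →ₗ[ℝ] F)
    (hp : ∀ x : F × G, p (N x) = x.1)
    (hrank : Module.finrank ℝ (LinearMap.range (N : (F × G) →ₗ[ℝ] H)) ≤ Module.finrank ℝ F)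
    (ξ : G) : N (0, ξ) = 0 := by
  set R := LinearMap.range (N : (F × G) →ₗ[ℝ] H)
  let q : R →ₗ[ℝ] F := p ∘ₗ R.subtype
  have hqsurj : Function.Surjective q := by
    intro f
    exact ⟨⟨N (f, 0), LinearMap.mem_range_self _ _⟩, hp (f, 0)⟩
  have hfr : Module.finrank ℝ R = Module.finrank ℝ F := by
    refine le_antisymm hrank ?_
    have := LinearMap.finrank_range_le q
    rwa [LinearMap.range_eq_top.mpr hqsurj, finrank_top] at this
  have hqinj : Function.Injective q :=
    (LinearMap.injective_iff_surjective_of_finrank_eq_finrank hfr).2 hqsurj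
  have h0 : q ⟨N (0, ξ), LinearMap.mem_range_self _ _⟩ = 0 := hp (0, ξ)
  have := hqinj (a₁ := ⟨N (0, ξ), LinearMap.mem_range_self _ _⟩) (a₂ := 0) (by simpa using h0)
  simpa [Subtype.ext_iff] using this

/-- Let `U ⊆ ℝᵐ` be a nonempty open set, `n < m`, and `Φ : U → ℝⁿ` a `C¹`
map. Then `Φ` is not almost everywhere injective: the set of `x ∈ U` for which some `y ∈ U`
with `y ≠ x` has `Φ y = Φ x` is not a Lebesgue null set. -/
theorem stmt11 (m n : ℕ) (hnm : n < m)
    (U : Set (Fin m → ℝ)) (hU : IsOpen U) (hne : U.Nonempty)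
    (Φ : (Fin m → ℝ) → (Fin n → ℝ)) (hΦ : ContDiffOn ℝ 1 Φ U) :
    volume {x ∈ U | ∃ y ∈ U, y ≠ x ∧ Φ y = Φ x} ≠ 0 := by
  have hΦat : ∀ x ∈ U, ContDiffAt ℝ 1 Φ x := fun x hx => hΦ.contDiffAt (hU.mem_nhds hx)
  have hdiff : ∀ x ∈ U, DifferentiableAt ℝ Φ x := fun x hx =>
    (hΦat x hx).differentiableAt one_ne_zero
  set ρ : (Fin m → ℝ) → ℕ := fun x =>
    Module.finrank ℝ (LinearMap.range (fderiv ℝ Φ x : (Fin m → ℝ) →ₗ[ℝ] (Fin n → ℝ))) with hρ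
  have hρn : ∀ x, ρ x ≤ n := by
    intro x
    have : Module.finrank ℝ (LinearMap.range (fderiv ℝ Φ x : (Fin m → ℝ) →ₗ[ℝ] (Fin n → ℝ)))
        ≤ Module.finrank ℝ (Fin n → ℝ) := Submodule.finrank_le _
    simpa [hρ] using this.trans_eq (by simp)
  have hbdd : BddAbove (ρ '' U) := ⟨n, by rintro r ⟨x, hx, rfl⟩; exact hρn x⟩
  set k : ℕ := sSup (ρ '' U) with hkdef
  obtain ⟨x₀, hx₀U, hx₀k⟩ : ∃ x₀ ∈ U, ρ x₀ = k := Nat.sSup_mem (hne.image ρ) hbdd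
  have hkmax : ∀ x ∈ U, ρ x ≤ k := fun x hx => le_csSup hbdd ⟨x, hx, rfl⟩
  have hkn : k ≤ n := by rw [← hx₀k]; exact hρn x₀
  set T := fderiv ℝ Φ x₀ with hT
  set E := LinearMap.range (T : (Fin m → ℝ) →ₗ[ℝ] (Fin n → ℝ)) with hE
  set K := LinearMap.ker (T : (Fin m → ℝ) →ₗ[ℝ] (Fin n → ℝ)) with hK
  have hEk : Module.finrank ℝ E = k := hx₀k
  have hKk : Module.finrank ℝ K = m - k := by
    have h := LinearMap.finrank_range_add_finrank_ker (T : (Fin m → ℝ) →ₗ[ℝ] (Fin n → ℝ))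
    rw [← hE, ← hK, hEk] at h
    have hm : Module.finrank ℝ (Fin m → ℝ) = m := by simp
    rw [hm] at h
    omega
  obtain ⟨E', hE'⟩ := Submodule.exists_isCompl E
  obtain ⟨K', hK'⟩ := Submodule.exists_isCompl K
  set πE : (Fin n → ℝ) →ₗ[ℝ] E := E.linearProjOfIsCompl E' hE' with hπE
  set πK : (Fin m → ℝ) →ₗ[ℝ] K := K.linearProjOfIsCompl K' hK' with hπK
  set πEc : (Fin n → ℝ) →L[ℝ] E := LinearMap.toContinuousLinearMap πE with hπEc
  set πKc : (Fin m → ℝ) →L[ℝ] K := LinearMap.toContinuousLinearMap πK with hπKc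
  set G : (Fin m → ℝ) → E × K := fun x => (πEc (Φ x), πKc x) with hG
  -- the derivative of G at x₀, as a linear map, is bijective
  set A : (Fin m → ℝ) →ₗ[ℝ] E × K := ((πE ∘ₗ (T : (Fin m → ℝ) →ₗ[ℝ] _)).prod πK) with hA
  have hAinj : Function.Injective A := by
    intro w w' hww
    rw [← sub_eq_zero] at hww ⊢
    rw [← map_sub] at hww
    set z := w - w' with hz
    have h1 : πE (T z) = 0 := congrArg Prod.fst hww
    have h2 : πK z = 0 := congrArg Prod.snd hww
    have hTz : T z ∈ E := LinearMap.mem_range_self _ _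
    have : πE (T z) = ⟨T z, hTz⟩ := Submodule.linearProjOfIsCompl_apply_left hE' ⟨T z, hTz⟩
    have hTz0 : T z = 0 := by
      have h4 : (⟨T z, hTz⟩ : E) = 0 := by rw [← this]; exact h1
      exact congrArg Subtype.val h4
    have hzK : z ∈ K := hTz0
    have h5 : πK z = ⟨z, hzK⟩ := Submodule.linearProjOfIsCompl_apply_left hK' ⟨z, hzK⟩
    have h6 : (⟨z, hzK⟩ : K) = 0 := by rw [← h5]; exact h2
    exact congrArg Subtype.val h6
  have hdims : Module.finrank ℝ (Fin m → ℝ) = Module.finrank ℝ (E × K) := by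
    rw [Module.finrank_prod, hEk, hKk]
    simp
    omega
  have hAbij : Function.Bijective A :=
    ⟨hAinj, (LinearMap.injective_iff_surjective_of_finrank_eq_finrank hdims).1 hAinj⟩
  set Aeq : (Fin m → ℝ) ≃L[ℝ] E × K :=
    (LinearEquiv.ofBijective A hAbij).toContinuousLinearEquiv with hAeq
  have hGd : HasFDerivAt G (Aeq : (Fin m → ℝ) →L[ℝ] E × K) x₀ := by
    have h1 : HasFDerivAt (fun x => πEc (Φ x)) (πEc.comp T) x₀ :=
      πEc.hasFDerivAt.comp x₀ (hdiff x₀ hx₀U).hasFDerivAt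
    have h2 : HasFDerivAt (fun x : Fin m → ℝ => πKc x) πKc x₀ := πKc.hasFDerivAt
    have := h1.prodMk h2
    exact this
  have hGc : ContDiffAt ℝ 1 G x₀ :=
    ((πEc.contDiff.contDiffAt).comp x₀ (hΦat x₀ hx₀U)).prodMk (πKc.contDiff.contDiffAt)
  set P := hGc.toOpenPartialHomeomorph G hGd one_ne_zero with hP
  have hPcoe : (P : (Fin m → ℝ) → E × K) = G := rfl
  set ψ : E × K → (Fin m → ℝ) := ⇑P.symm with hψ
  have hx₀src : x₀ ∈ P.source := hGc.mem_toOpenPartialHomeomorph_source hGd one_ne_zero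
  have hGx₀tgt : G x₀ ∈ P.target := P.map_source hx₀src
  -- ψ is C¹ near G x₀
  have hψc : ContDiffAt ℝ 1 ψ (G x₀) := hGc.to_localInverse hGd one_ne_zero
  obtain ⟨V, hVmem, hVψ⟩ := hψc.contDiffOn le_rfl (by simp)
  -- an open neighborhood where everything is good
  set Ω : Set (E × K) := interior V ∩ (P.target ∩ P.symm ⁻¹' U) with hΩ
  have hΩopen : IsOpen Ω := isOpen_interior.inter (P.symm.isOpen_inter_preimage hU)
  have hΩmem : G x₀ ∈ Ω := by
    refine ⟨mem_interior_iff_mem_nhds.2 hVmem, hGx₀tgt, ?_⟩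
    show ψ (G x₀) ∈ U
    have : ψ (G x₀) = x₀ := P.left_inv hx₀src
    rwa [this]
  obtain ⟨ε, hε, hball⟩ := Metric.isOpen_iff.1 hΩopen (G x₀) hΩmem
  set W : Set (E × K) := Metric.ball (G x₀) ε with hW
  have hWΩ : W ⊆ Ω := hball
  -- for w ∈ W, ψ w ∈ U and G (ψ w) = w
  have hψU : ∀ w ∈ W, ψ w ∈ U := fun w hw => (hWΩ hw).2.2
  have hGψ : ∀ w ∈ W, G (ψ w) = w := fun w hw => P.right_inv (hWΩ hw).2.1
  have hψdiff : ∀ w ∈ W, DifferentiableAt ℝ ψ w := by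
    intro w hw
    have : ContDiffAt ℝ 1 ψ w :=
      hVψ.contDiffAt (mem_nhds_iff.2 ⟨interior V, interior_subset, isOpen_interior, (hWΩ hw).1⟩)
    exact this.differentiableAt one_ne_zero
  -- key: the derivative of Φ ∘ ψ kills K directions
  have hker : ∀ w ∈ W, ∀ ξ : K,
      ((fderiv ℝ Φ (ψ w)).comp (fderiv ℝ ψ w)) (0, ξ) = 0 := by
    intro w hw ξ
    set N : (E × K) →L[ℝ] (Fin n → ℝ) := (fderiv ℝ Φ (ψ w)).comp (fderiv ℝ ψ w) with hN
    have hHd : HasFDerivAt (Φ ∘ ψ) N w :=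
      (hdiff _ (hψU w hw)).hasFDerivAt.comp w (hψdiff w hw).hasFDerivAt
    -- π_E ∘ (Φ ∘ ψ) = fst eventually
    have hfst : ∀ w' ∈ W, πEc (Φ (ψ w')) = w'.1 := by
      intro w' hw'
      have := congrArg Prod.fst (hGψ w' hw')
      exact this
    have hcomp : HasFDerivAt (fun w' => πEc ((Φ ∘ ψ) w')) (πEc.comp N) w :=
      πEc.hasFDerivAt.comp w hHd
    have hcong : HasFDerivAt (fun w' : E × K => w'.1) (πEc.comp N) w := by
      refine hcomp.congr_of_eventuallyEq ?_
      filter_upwards [Metric.isOpen_ball.mem_nhds hw] with w' hw'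
      exact (hfst w' hw').symm
    have huniq : πEc.comp N = ContinuousLinearMap.fst ℝ E K :=
      hcong.unique (hasFDerivAt_fst)
    -- rank bound
    have hrank : Module.finrank ℝ (LinearMap.range (N : (E × K) →ₗ[ℝ] (Fin n → ℝ)))
        ≤ Module.finrank ℝ E := by
      have hle : LinearMap.range (N : (E × K) →ₗ[ℝ] (Fin n → ℝ))
          ≤ LinearMap.range (fderiv ℝ Φ (ψ w) : (Fin m → ℝ) →ₗ[ℝ] (Fin n → ℝ)) := by
        rintro _ ⟨z, rfl⟩
        exact ⟨fderiv ℝ ψ w z, rfl⟩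
      have := Submodule.finrank_mono hle
      rw [hEk]
      exact this.trans (hkmax _ (hψU w hw))
    have hp : ∀ x : E × K, πE (N x) = x.1 := by
      intro x
      have := congrFun (congrArg (fun (L : (E × K) →L[ℝ] E) => (L : E × K → E)) huniq) x
      exact this
    exact key_lin N πE hp hrank ξ
  -- constancy of Φ ∘ ψ along K directions
  have hconst : ∀ u : E, ∀ v v' : K, (u, v) ∈ W → (u, v') ∈ W →
      Φ (ψ (u, v')) = Φ (ψ (u, v)) := by
    intro u v v' hv hv'
    set s : Set K := {ξ : K | ((u, ξ) : E × K) ∈ W} with hs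
    have hWconv : Convex ℝ W := convex_ball _ _
    have hsconv : Convex ℝ s := by
      intro ξ₁ h1 ξ₂ h2 a b ha hb hab
      have h3 := hWconv h1 h2 ha hb hab
      have : a • ((u, ξ₁) : E × K) + b • ((u, ξ₂) : E × K) = (u, a • ξ₁ + b • ξ₂) := by
        rw [Prod.smul_mk, Prod.smul_mk, Prod.mk_add_mk, ← add_smul, hab, one_smul]
      rwa [this] at h3
    have hderiv : ∀ ξ ∈ s, HasFDerivWithinAt (fun ξ : K => Φ (ψ (u, ξ)))
        ((0 : K →L[ℝ] (Fin n → ℝ))) s ξ := by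
      intro ξ hξ
      have hincl : HasFDerivAt (fun ξ : K => ((u, ξ) : E × K))
          (ContinuousLinearMap.inr ℝ E K) ξ := hasFDerivAt_prodMk_right u ξ
      have hHd : HasFDerivAt (Φ ∘ ψ)
          ((fderiv ℝ Φ (ψ (u, ξ))).comp (fderiv ℝ ψ (u, ξ))) (u, ξ) :=
        (hdiff _ (hψU _ hξ)).hasFDerivAt.comp _ (hψdiff _ hξ).hasFDerivAt
      have hcomp := hHd.comp ξ hincl
      have hzero : (((fderiv ℝ Φ (ψ (u, ξ))).comp (fderiv ℝ ψ (u, ξ))).comp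
          (ContinuousLinearMap.inr ℝ E K)) = 0 := by
        refine ContinuousLinearMap.ext fun ξ' => ?_
        have := hker (u, ξ) hξ ξ'
        simpa using this
      rw [hzero] at hcomp
      exact hcomp.hasFDerivWithinAt
    have hbound : ∀ ξ ∈ s, ‖(0 : K →L[ℝ] (Fin n → ℝ))‖ ≤ 0 := fun ξ _ => le_of_eq ContinuousLinearMap.opNorm_zero
    have hle := hsconv.norm_image_sub_le_of_norm_hasFDerivWithin_le hderiv hbound hv hv'
    rw [zero_mul] at hle
    have := norm_le_zero_iff.1 hle
    exact sub_eq_zero.1 this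
  -- pick a nonzero direction in K
  have hKpos : 0 < Module.finrank ℝ K := by rw [hKk]; omega
  haveI : Nontrivial K := Module.nontrivial_of_finrank_pos hKpos
  obtain ⟨ξ₀, hξ₀⟩ := exists_ne (0 : K)
  have hξ₀norm : 0 < ‖ξ₀‖ := norm_pos_iff.2 hξ₀
  set ξ₁ : K := (ε / 2) • ‖ξ₀‖⁻¹ • ξ₀ with hξ₁
  have hξ₁norm : ‖ξ₁‖ = ε / 2 := by
    rw [hξ₁, norm_smul, norm_smul, Real.norm_eq_abs, Real.norm_eq_abs,
      abs_of_pos (by positivity : (0:ℝ) < ε / 2), abs_of_pos (inv_pos.2 hξ₀norm),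
      inv_mul_cancel₀ hξ₀norm.ne', mul_one]
  have hξ₁ne : ξ₁ ≠ 0 := by
    intro h
    rw [h, norm_zero] at hξ₁norm
    linarith
  set W' : Set (E × K) := Metric.ball (G x₀) (ε / 2) with hW'
  have hW'W : W' ⊆ W := Metric.ball_subset_ball (by linarith)
  have hsub : ψ '' W' ⊆ {x ∈ U | ∃ y ∈ U, y ≠ x ∧ Φ y = Φ x} := by
    rintro _ ⟨⟨u, v⟩, hw, rfl⟩
    have hwW : ((u, v) : E × K) ∈ W := hW'W hw
    have hw2 : ((u, v + ξ₁) : E × K) ∈ W := by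
      rw [hW, Metric.mem_ball]
      calc dist ((u, v + ξ₁) : E × K) (G x₀)
          ≤ dist ((u, v + ξ₁) : E × K) ((u, v) : E × K) + dist ((u, v) : E × K) (G x₀) :=
            dist_triangle _ _ _
        _ < ε / 2 + ε / 2 := by
            refine add_lt_add_of_le_of_lt ?_ (by simpa [hW'] using hw)
            rw [Prod.dist_eq]
            simp only [dist_self]
            have : dist (v + ξ₁) v = ‖ξ₁‖ := by simp [dist_eq_norm]
            rw [this, hξ₁norm]
            simp [le_of_lt hε, max_le_iff]
            linarith
        _ = ε := by ring
    refine ⟨hψU _ hwW, ψ (u, v + ξ₁), hψU _ hw2, ?_, hconst u v (v + ξ₁) hwW hw2⟩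
    intro heq
    have hG2 := congrArg G heq
    rw [hGψ _ hw2, hGψ _ hwW] at hG2
    have : v + ξ₁ = v := congrArg Prod.snd hG2
    exact hξ₁ne (by simpa using this)
  have hopen : IsOpen (ψ '' W') := by
    refine P.symm.isOpen_image_of_subset_source Metric.isOpen_ball ?_
    rw [OpenPartialHomeomorph.symm_source]
    exact fun w hw => (hWΩ (hW'W hw)).2.1
  have hnonempty : (ψ '' W').Nonempty :=
    ⟨ψ (G x₀), ⟨G x₀, Metric.mem_ball_self (by linarith), rfl⟩⟩
  have hpos := hopen.measure_pos volume hnonempty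
  exact (hpos.trans_le (measure_mono hsub)).ne'
end

section
/- Let q ≥ p ≥ 1. For every nonzero matrix W ∈ ℂ^{p×q}, the linear function P ↦ Tr(P W^T) does not vanish identically on the set of complex row-orthonormal matrices: there exists P ∈ ℂ^{p×q} with P P^T = I_p (transpose, not conjugate transpose) such that Tr(P W^T) ≠ 0. -/
open Matrix

/-- Let `q ≥ p ≥ 1`. For every nonzero `W ∈ ℂ^{p×q}`, the linear function
`P ↦ Tr(P Wᵀ)` does not vanish identically on the set of complex row-orthonormal matrices:
there is `P` with `P Pᵀ = I` (transpose, not conjugate transpose) and `Tr(P Wᵀ) ≠ 0`. -/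
theorem stmt15 (p q : ℕ) (hp : 1 ≤ p) (hpq : p ≤ q)
    (W : Matrix (Fin p) (Fin q) ℂ) (hW : W ≠ 0) :
    ∃ P : Matrix (Fin p) (Fin q) ℂ, P * Pᵀ = 1 ∧ (P * Wᵀ).trace ≠ 0 := by
  -- choose a nonzero entry
  obtain ⟨i₀, j₀, hij⟩ : ∃ i j, W i j ≠ 0 := by
    by_contra h
    push_neg at h
    exact hW (by ext i j; simpa using h i j)
  -- injection σ : Fin p → Fin q with σ i₀ = j₀
  set σ : Fin p → Fin q := fun i => Equiv.swap j₀ (Fin.castLE hpq i₀) (Fin.castLE hpq i) with hσ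
  have hσinj : Function.Injective σ :=
    (Equiv.swap j₀ (Fin.castLE hpq i₀)).injective.comp (Fin.castLE_injective hpq)
  have hσi₀ : σ i₀ = j₀ := Equiv.swap_apply_right _ _
  -- signed permutation matrices
  set P : ℂ → Matrix (Fin p) (Fin q) ℂ :=
    fun ε i j => (if i = i₀ then ε else 1) * (if j = σ i then 1 else 0) with hP
  have hOrth : ∀ ε : ℂ, ε * ε = 1 → P ε * (P ε)ᵀ = 1 := by
    intro ε hε
    ext i k
    simp only [Matrix.mul_apply, transpose_apply]
    simp only [hP]
    rw [Finset.sum_congr rfl (g := fun j => if j = σ i then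
          (if σ i = σ k then
            (if i = i₀ then ε else 1) * (if k = i₀ then ε else 1) else 0) else 0)
        (by
          intro j _
          by_cases h1 : j = σ i
          · subst h1
            by_cases h2 : σ i = σ k <;> simp [h2] <;> ring
          · simp [h1])]
    rw [Finset.sum_ite_eq' Finset.univ (σ i)]
    simp only [Finset.mem_univ, if_true]
    by_cases hik : i = k
    · subst hik
      by_cases h : i = i₀ <;> simp [h, hε, Matrix.one_apply]
    · have : σ i ≠ σ k := fun h => hik (hσinj h)
      simp [this, Matrix.one_apply, hik]
  have hTr : ∀ ε : ℂ, (P ε * Wᵀ).trace =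
      ∑ i : Fin p, (if i = i₀ then ε else 1) * W i (σ i) := by
    intro ε
    simp only [Matrix.trace, Matrix.diag, Matrix.mul_apply, transpose_apply]
    simp only [hP]
    refine Finset.sum_congr rfl fun i _ => ?_
    rw [Finset.sum_congr rfl (g := fun j => if j = σ i then
          (if i = i₀ then ε else 1) * W i (σ i) else 0)
        (by
          intro j _
          by_cases h1 : j = σ i
          · subst h1; simp
          · simp [h1])]
    rw [Finset.sum_ite_eq' Finset.univ (σ i)]
    simp
  by_contra hcon
  push_neg at hcon
  have h1 := hcon (P 1) (hOrth 1 (by ring))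
  have h2 := hcon (P (-1)) (hOrth (-1) (by ring))
  have hdiff : (P 1 * Wᵀ).trace - (P (-1) * Wᵀ).trace = 2 * W i₀ j₀ := by
    rw [hTr, hTr, ← Finset.sum_sub_distrib]
    rw [Finset.sum_congr rfl (g := fun i =>
        if i = i₀ then 2 * W i₀ j₀ else 0)
        (by
          intro i _
          by_cases h : i = i₀
          · subst h; simp only [if_pos rfl, hσi₀]; simp; ring
          · simp [h])]
    rw [Finset.sum_ite_eq' Finset.univ i₀]
    simp
  rw [h1, h2] at hdiff
  simp only [sub_zero, zero_sub] at hdiff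
  exact hij (by simpa using hdiff.symm)
end

section
/- Let d ≥ 2 and 1 ≤ s ≤ d − 1. For every nonzero matrix W ∈ ℂ^{d×d}, the linear function P ↦ Tr(P W) does not vanish identically on the set of rank-s idempotents: there exists P ∈ ℂ^{d×d} with P² = P and rank P = s such that Tr(P W) ≠ 0. -/
open Matrix

namespace Stmt16Aux

variable {d : ℕ}

/-- indicator function of a finset -/
def ind (S : Finset (Fin d)) : Fin d → ℂ := fun k => if k ∈ S then 1 else 0

lemma ind_mul_self (S : Finset (Fin d)) : ind S * ind S = ind S := by
  funext k; by_cases h : k ∈ S <;> simp [ind, h]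

lemma D_idem (S : Finset (Fin d)) :
    diagonal (ind S) * diagonal (ind S) = diagonal (ind S) := by
  rw [diagonal_mul_diagonal]
  exact congrArg diagonal (by funext k; by_cases h : k ∈ S <;> simp [ind, h])

lemma D_rank (S : Finset (Fin d)) : (diagonal (ind S)).rank = S.card := by
  rw [Matrix.rank_diagonal]
  rw [Fintype.card_subtype]
  congr 1
  ext k
  simp [ind]

lemma D_trace (S : Finset (Fin d)) (W : Matrix (Fin d) (Fin d) ℂ) :
    (diagonal (ind S) * W).trace = ∑ k ∈ S, W k k := by
  rw [Matrix.trace]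
  have : ∀ k, (diagonal (ind S) * W).diag k = if k ∈ S then W k k else 0 := by
    intro k
    simp only [Matrix.diag, Matrix.diagonal_mul, ind]
    by_cases h : k ∈ S <;> simp [h]
  rw [Finset.sum_congr rfl fun k _ => this k]
  simp [Finset.sum_ite_mem]

lemma D_mul_E (S : Finset (Fin d)) (i j : Fin d) (hi : i ∈ S) (t : ℂ) :
    diagonal (ind S) * single i j t = single i j t := by
  ext a b
  rw [Matrix.diagonal_mul]
  by_cases ha : a = i
  · subst ha; simp [ind, hi]
  · simp [Matrix.single_apply_of_ne (i := i) (j := j) (i' := a) (j' := b) (c := t) (fun h => ha h.1.symm)]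

lemma E_mul_D (S : Finset (Fin d)) (i j : Fin d) (hj : j ∉ S) (t : ℂ) :
    single i j t * diagonal (ind S) = 0 := by
  ext a b
  rw [Matrix.mul_diagonal]
  by_cases hb : b = j
  · subst hb; simp [ind, hj]
  · simp [Matrix.single_apply_of_ne (i := i) (j := j) (i' := a) (j' := b) (c := t) (fun h => hb h.2.symm)]

lemma E_trace (i j : Fin d) (hij : i ≠ j) (t : ℂ) (W : Matrix (Fin d) (Fin d) ℂ) :
    (single i j t * W).trace = t * W j i := by
  rw [Matrix.trace]
  rw [Finset.sum_eq_single i]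
  · simp [Matrix.diag]
  · intro b _ hb
    simp [Matrix.diag, Matrix.single_mul_apply_of_ne (c := t) i j b b hb W]
  · simp

end Stmt16Aux

open Stmt16Aux

/-- Let `d ≥ 2` and `1 ≤ s ≤ d - 1`. For every nonzero `W ∈ ℂ^{d×d}`, the
linear function `P ↦ Tr(P W)` does not vanish identically on the set of rank-`s`
idempotents: there is `P` with `P² = P`, `rank P = s` and `Tr(P W) ≠ 0`. -/
theorem stmt16 (d s : ℕ) (hd : 2 ≤ d) (hs1 : 1 ≤ s) (hs2 : s ≤ d - 1)
    (W : Matrix (Fin d) (Fin d) ℂ) (hW : W ≠ 0) :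
    ∃ P : Matrix (Fin d) (Fin d) ℂ, P * P = P ∧ P.rank = s ∧ (P * W).trace ≠ 0 := by
  -- there is a nonzero entry
  obtain ⟨a, b, hab⟩ : ∃ a b, W a b ≠ 0 := by
    by_contra h
    push_neg at h
    exact hW (by ext a b; simp [h])
  by_cases hdiag : b = a
  · -- nonzero diagonal entry `W a a ≠ 0`; find a subset with nonzero diagonal sum
    subst hdiag
    have hkey : ∃ T : Finset (Fin d), T.card = s ∧ (∑ k ∈ T, W k k) ≠ 0 := by
      by_contra h
      push_neg at h
      -- all diagonal entries are equal
      have heq : ∀ x y : Fin d, W x x = W y y := by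
        intro x y
        rcases eq_or_ne x y with rfl | hxy
        · rfl
        · set U' : Finset (Fin d) := (Finset.univ.erase y).erase x with hU'
          have hxU' : x ∈ Finset.univ.erase y := Finset.mem_erase.2 ⟨hxy, Finset.mem_univ x⟩
          have hcard : U'.card = d - 2 := by
            rw [hU', Finset.card_erase_of_mem hxU', Finset.card_erase_of_mem (Finset.mem_univ y)]
            simp only [Finset.card_univ, Fintype.card_fin]
            omega
          obtain ⟨U, hUsub, hUcard⟩ := Finset.exists_subset_card_eq
            (show s - 1 ≤ U'.card by omega)
          have hxU : x ∉ U := fun hx => (Finset.mem_erase.1 (hUsub hx)).1 rfl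
          have hyU : y ∉ U := fun hy =>
            (Finset.mem_erase.1 (Finset.mem_of_mem_erase (hUsub hy))).1 rfl
          have h1 : ∑ k ∈ insert x U, W k k = 0 := h _ (by
            rw [Finset.card_insert_of_notMem hxU, hUcard]; omega)
          have h2 : ∑ k ∈ insert y U, W k k = 0 := h _ (by
            rw [Finset.card_insert_of_notMem hyU, hUcard]; omega)
          rw [Finset.sum_insert hxU] at h1
          rw [Finset.sum_insert hyU] at h2
          linear_combination h1 - h2
      -- pick a set of size `s` containing `a`
      obtain ⟨S, hSsub, -, hScard⟩ := Finset.exists_subsuperset_card_eq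
        (Finset.subset_univ {b}) (by simpa using hs1)
        (by rw [Finset.card_univ, Fintype.card_fin]; omega)
      have hsum : ∑ k ∈ S, W k k = s * W b b := by
        rw [Finset.sum_congr rfl fun k _ => heq k b, Finset.sum_const, hScard, nsmul_eq_mul]
      have : (s : ℂ) * W b b ≠ 0 :=
        mul_ne_zero (Nat.cast_ne_zero.2 (by omega)) hab
      exact this (hsum ▸ h S hScard)
    obtain ⟨T, hTcard, hTsum⟩ := hkey
    exact ⟨diagonal (ind T), D_idem T, by rw [D_rank, hTcard], by rwa [D_trace]⟩
  · -- nonzero off-diagonal entry `W a b` with `b ≠ a`; use a triangular idempotent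
    -- take i := b, j := a, so the entry picked up is `W j i = W a b`
    set i := b
    set j := a
    have hij : i ≠ j := hdiag
    -- find S with i ∈ S, j ∉ S, |S| = s
    have hsub : ({i} : Finset (Fin d)) ⊆ Finset.univ.erase j :=
      Finset.singleton_subset_iff.2 (Finset.mem_erase.2 ⟨hij, Finset.mem_univ i⟩)
    obtain ⟨S, hSsub₁, hSsub₂, hScard⟩ := Finset.exists_subsuperset_card_eq hsub
      (by simpa using hs1)
      (by rw [Finset.card_erase_of_mem (Finset.mem_univ j), Finset.card_univ,
            Fintype.card_fin]; omega)
    have hiS : i ∈ S := hSsub₁ (Finset.mem_singleton_self i)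
    have hjS : j ∉ S := fun hj => (Finset.mem_erase.1 (hSsub₂ hj)).1 rfl
    set c : ℂ := ∑ k ∈ S, W k k
    set t : ℂ := (1 - c) / W j i
    set E : Matrix (Fin d) (Fin d) ℂ := single i j t
    set D : Matrix (Fin d) (Fin d) ℂ := diagonal (ind S)
    refine ⟨D + E, ?_, ?_, ?_⟩
    · -- idempotent
      have hEE : E * E = 0 := Matrix.single_mul_single_of_ne (c := t) i j i hij.symm t
      rw [add_mul, mul_add, mul_add, D_idem, D_mul_E S i j hiS, E_mul_D S i j hjS, hEE]
      abel
    · -- rank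
      have hfact : D + E = D * (1 + E) := by
        rw [mul_add, mul_one, D_mul_E S i j hiS]
      have hinv : (1 + E) * (1 - E) = 1 := by
        have hEE : E * E = 0 := Matrix.single_mul_single_of_ne (c := t) i j i hij.symm t
        rw [mul_sub, mul_one, add_mul, one_mul, hEE, add_zero, add_sub_cancel_right]
      have hunit : IsUnit (1 + E).det := Matrix.isUnit_det_of_right_inverse hinv
      rw [hfact, Matrix.rank_mul_eq_left_of_isUnit_det _ _ hunit, D_rank, hScard]
    · -- trace
      rw [add_mul, Matrix.trace_add, D_trace, E_trace i j hij]
      have : t * W j i = 1 - c := div_mul_cancel₀ _ hab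
      rw [this]
      simp [c]
end
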